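/- (Matrix estimate for a scaling operation.) With R, v_R, H_v, φ as above, fix nonnegative integers r,s and rationals r',s' with r'+s' = r+s, and let D ∈ M_2(R) have entries in [[H_{r'+γ}, H_{r+γ}],[H_{s+γ}, H_{s'+γ}]] with γ > 0. If g ∈ H_{γ'} ∩ uR with γ' > 0, then [[1-g,0],[0,1]] D φ([[1-g,0],[0,1]])^{-1} - D has (1,1)-entry in H_{r'+γ+γ'}, (1,2)-entry in H_{r+γ+γ'}, (2,1)-entry in H_{s+γ+γ'+p-1}, and (2,2)-entry equal to 0. -/

import Mathlib

open PowerSeries Filter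

noncomputable section

/-- `Hge m vp v f` says the Gauss valuation `v_R(f) = min_i (i + m * vp (a_i))` is `≥ v`. -/
def Hge {F : Type*} [Field F] (m : ℝ) (vp : F → ℝ) (v : ℝ) (f : PowerSeries F) : Prop :=
  ∀ i : ℕ, (PowerSeries.coeff i) f ≠ 0 → v ≤ (i : ℝ) + m * vp ((PowerSeries.coeff i) f)

/-- `vReq m vp f v` says `v_R(f) = v`: it is a lower bound and it is attained. -/
def vReq {F : Type*} [Field F] (m : ℝ) (vp : F → ℝ) (f : PowerSeries F) (v : ℝ) : Prop :=
  Hge m vp v f ∧ ∃ i : ℕ, (PowerSeries.coeff i) f ≠ 0 ∧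
    (i : ℝ) + m * vp ((PowerSeries.coeff i) f) = v

/-- membership in `R = O_{F,[0,p^{-1/m}]}`: `i + m * vp (a_i) → ∞`. -/
def MemR {F : Type*} [Field F] (m : ℝ) (vp : F → ℝ) (f : PowerSeries F) : Prop :=
  ∀ N : ℝ, ∀ᶠ i : ℕ in Filter.atTop,
    (PowerSeries.coeff i) f = 0 ∨ N ≤ (i : ℝ) + m * vp ((PowerSeries.coeff i) f)

/-- The Frobenius `φ` on power series: substitution `u ↦ u^p`. -/
def phiF {F : Type*} [Field F] (p : ℕ) (f : PowerSeries F) : PowerSeries F :=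
  PowerSeries.mk fun n => if p ∣ n then (PowerSeries.coeff (n / p)) f else 0

/-- Formal derivative `d/du` of a power series. -/
def dWrt {F : Type*} [Field F] (f : PowerSeries F) : PowerSeries F :=
  PowerSeries.mk fun n => ((n : F) + 1) * (PowerSeries.coeff (n + 1)) f

section helpers

variable {F : Type*} [Field F] {m : ℝ} {vp : F → ℝ}

variable (hvp_mul : ∀ x y : F, x ≠ 0 → y ≠ 0 → vp (x * y) = vp x + vp y)
variable (hvp_add : ∀ x y : F, x ≠ 0 → y ≠ 0 → x + y ≠ 0 → min (vp x) (vp y) ≤ vp (x + y))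

include hvp_mul in
lemma vp_one' : vp (1 : F) = 0 := by
  have := hvp_mul 1 1 one_ne_zero one_ne_zero
  simp at this; linarith

include hvp_mul in
lemma vp_neg' (x : F) (hx : x ≠ 0) : vp (-x) = vp x := by
  have h1 : vp ((-1 : F) * (-1)) = vp (-1) + vp (-1) :=
    hvp_mul _ _ (by norm_num) (by norm_num)
  have h2 : ((-1 : F) * (-1)) = 1 := by ring
  rw [h2, vp_one' hvp_mul] at h1
  have h3 : vp ((-1 : F) * x) = vp (-1) + vp x := hvp_mul _ _ (by norm_num) hx
  rw [neg_one_mul] at h3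
  rw [h3]; linarith

include hvp_add in
lemma vp_add2 {c : ℝ} {a b : F} (ha : a ≠ 0 → c ≤ vp a) (hb : b ≠ 0 → c ≤ vp b)
    (hab : a + b ≠ 0) : c ≤ vp (a + b) := by
  rcases eq_or_ne a 0 with h | h
  · simpa [h] using hb (by simpa [h] using hab)
  rcases eq_or_ne b 0 with h' | h'
  · simpa [h'] using ha h
  have := hvp_add a b h h' hab
  have := ha h; have := hb h'
  have := le_min (ha h) (hb h')
  linarith [le_min (ha h) (hb h'), hvp_add a b h h' hab]

include hvp_add in
lemma vp_sum' {ι : Type*} [DecidableEq ι] {c : ℝ} (t : Finset ι) (f : ι → F)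
    (h : ∀ i ∈ t, f i ≠ 0 → c ≤ vp (f i)) :
    (∑ i ∈ t, f i) ≠ 0 → c ≤ vp (∑ i ∈ t, f i) := by
  induction t using Finset.induction_on with
  | empty => simp
  | @insert a t ha ih =>
    intro hs
    rw [Finset.sum_insert ha] at hs ⊢
    exact vp_add2 hvp_add (h a (Finset.mem_insert_self a t))
      (ih (fun i hi => h i (Finset.mem_insert_of_mem hi))) hs

include hvp_add in
lemma hge_add {v : ℝ} {f g : PowerSeries F} (hf : Hge m vp v f) (hg : Hge m vp v g)
    (hm : 0 < m) : Hge m vp v (f + g) := by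
  intro n hn
  rw [map_add] at hn ⊢
  have key : (v - n) / m ≤ vp (coeff n f + coeff n g) := by
    refine vp_add2 hvp_add (fun h => ?_) (fun h => ?_) hn
    · have := hf n h; rw [div_le_iff₀ hm]; linarith [mul_comm m (vp (coeff n f))]
    · have := hg n h; rw [div_le_iff₀ hm]; linarith [mul_comm m (vp (coeff n g))]
    -- nlinarith fallback
  rw [div_le_iff₀ hm] at key
  nlinarith

include hvp_mul in
lemma hge_neg {v : ℝ} {f : PowerSeries F} (hf : Hge m vp v f) : Hge m vp v (-f) := by
  intro n hn
  rw [map_neg] at hn ⊢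
  rw [vp_neg' hvp_mul _ (by simpa using hn)]
  exact hf n (by simpa using hn)

include hvp_mul hvp_add in
lemma hge_mul {v w : ℝ} {f g : PowerSeries F} (hf : Hge m vp v f) (hg : Hge m vp w g)
    (hm : 0 < m) : Hge m vp (v + w) (f * g) := by
  intro n hn
  rw [PowerSeries.coeff_mul] at hn ⊢
  have key : (v + w - n) / m ≤ vp (∑ x ∈ Finset.HasAntidiagonal.antidiagonal n, coeff x.1 f * coeff x.2 g) := by
    refine vp_sum' hvp_add _ _ (fun x hx hne => ?_) hn
    have h1 : coeff x.1 f ≠ 0 := fun h => hne (by simp [h])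
    have h2 : coeff x.2 g ≠ 0 := fun h => hne (by simp [h])
    rw [hvp_mul _ _ h1 h2]
    have e1 := hf x.1 h1
    have e2 := hg x.2 h2
    have hx12 : (x.1 : ℝ) + x.2 = n := by
      have := Finset.HasAntidiagonal.mem_antidiagonal.mp hx
      exact_mod_cast congrArg (Nat.cast : ℕ → ℝ) this
    rw [div_le_iff₀ hm]
    nlinarith
  rw [div_le_iff₀ hm] at key
  nlinarith

lemma hge_mono {v w : ℝ} {f : PowerSeries F} (hvw : v ≤ w) (hf : Hge m vp w f) :
    Hge m vp v f := fun n hn => le_trans hvw (hf n hn)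

lemma coeff_phiF (p : ℕ) (f : PowerSeries F) (n : ℕ) :
    coeff n (phiF p f) = if p ∣ n then coeff (n / p) f else 0 := by
  simp [phiF]

lemma hge_phi {p : ℕ} (hp : 2 ≤ p) {v : ℝ} (hvpos : 0 ≤ v) {g : PowerSeries F}
    (hg : Hge m vp v g) (hg0 : constantCoeff g = 0) (hm : 0 < m) :
    Hge m vp (v + ((p : ℝ) - 1)) (phiF p g) := by
  intro n hn
  rw [coeff_phiF] at hn ⊢
  by_cases hd : p ∣ n
  · rw [if_pos hd] at hn ⊢
    obtain ⟨k, hk⟩ := hd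
    have hpk : n / p = k := by subst hk; exact Nat.mul_div_cancel_left k (by omega)
    rw [hpk] at hn ⊢
    have hk1 : 1 ≤ k := by
      rcases Nat.eq_zero_or_pos k with h | h
      · exfalso; subst h; rw [← PowerSeries.coeff_zero_eq_constantCoeff] at hg0; exact hn hg0
      · exact h
    have := hg k hn
    have hn' : (n : ℝ) = p * k := by exact_mod_cast congrArg (Nat.cast : ℕ → ℝ) hk
    rw [hn']
    have hpR : (2 : ℝ) ≤ p := by exact_mod_cast hp
    have hkR : (1 : ℝ) ≤ k := by exact_mod_cast hk1
    nlinarith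
  · rw [if_neg hd] at hn; exact absurd rfl hn

include hvp_mul hvp_add in
lemma hge_inv_sub_one {v : ℝ} (hv : 0 < v) {G : PowerSeries F}
    (hG : Hge m vp v G) (hG0 : constantCoeff G = 0) (hm : 0 < m) :
    Hge m vp v ((1 - G)⁻¹ - 1) := by
  have hc : constantCoeff (1 - G) ≠ 0 := by simp [hG0]
  have h1 : (1 - G) * (1 - G)⁻¹ = 1 := PowerSeries.mul_inv_cancel _ hc
  set e := (1 - G)⁻¹ - 1 with hedef
  have he : e = G * e + G := by rw [hedef]; linear_combination h1
  intro n
  induction n using Nat.strong_induction_on with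
  | _ n ih =>
    intro hn
    have hcn : coeff n e = coeff n (G * e) + coeff n G := by rw [← map_add, ← he]
    rw [hcn] at hn ⊢
    have key : (v - n) / m ≤ vp (coeff n (G * e) + coeff n G) := by
      refine vp_add2 hvp_add (fun h => ?_) (fun h => ?_) hn
      · rw [PowerSeries.coeff_mul] at h ⊢
        refine vp_sum' hvp_add _ _ (fun x hx hne => ?_) h
        have h1' : coeff x.1 G ≠ 0 := fun hh => hne (by simp [hh])
        have h2' : coeff x.2 e ≠ 0 := fun hh => hne (by simp [hh])
        have hx1 : 1 ≤ x.1 := by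
          rcases Nat.eq_zero_or_pos x.1 with h0 | h0
          · exfalso; apply h1'; rw [h0]
            rw [PowerSeries.coeff_zero_eq_constantCoeff]; exact hG0
          · exact h0
        have hx2 : x.2 < n := by have := Finset.HasAntidiagonal.mem_antidiagonal.mp hx; omega
        have e1 := hG x.1 h1'
        have e2 := ih x.2 hx2 h2'
        rw [hvp_mul _ _ h1' h2', div_le_iff₀ hm]
        have hx12 : (x.1 : ℝ) + x.2 = n := by exact_mod_cast Finset.HasAntidiagonal.mem_antidiagonal.mp hx
        nlinarith [hv.le]
      · have := hG n h
        rw [div_le_iff₀ hm]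
        nlinarith
    rw [div_le_iff₀ hm] at key
    nlinarith


end helpers


/-- matrix estimate for the scaling operation `D ↦ A D φ(A)⁻¹`
with `A = [[1-g,0],[0,1]]`, so `φ(A)⁻¹ = [[(1-φ(g))⁻¹,0],[0,1]]`. -/
theorem stmt_13 {F : Type*} [Field F] (p : ℕ) (hp : p.Prime) (m : ℝ) (hm : 1 < m)
    (vp : F → ℝ)
    (hvp_mul : ∀ x y : F, x ≠ 0 → y ≠ 0 → vp (x * y) = vp x + vp y)
    (hvp_add : ∀ x y : F, x ≠ 0 → y ≠ 0 → x + y ≠ 0 → min (vp x) (vp y) ≤ vp (x + y))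
    (r s : ℕ) (r' s' : ℝ) (hsum : r' + s' = (r : ℝ) + s)
    (γ γ' : ℝ) (hγ : 0 < γ) (hγ' : 0 < γ')
    (D : Matrix (Fin 2) (Fin 2) (PowerSeries F))
    (hD11 : Hge m vp (r' + γ) (D 0 0)) (hD12 : Hge m vp ((r : ℝ) + γ) (D 0 1))
    (hD21 : Hge m vp ((s : ℝ) + γ) (D 1 0)) (hD22 : Hge m vp (s' + γ) (D 1 1))
    (g : PowerSeries F) (hg : Hge m vp γ' g)
    (hgd : (PowerSeries.X : PowerSeries F) ∣ g) :
    let M := (!![1 - g, 0; 0, 1] : Matrix (Fin 2) (Fin 2) (PowerSeries F)) * D *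
      !![(1 - phiF p g)⁻¹, 0; 0, 1]
    Hge m vp (r' + γ + γ') ((M - D) 0 0) ∧
      Hge m vp ((r : ℝ) + γ + γ') ((M - D) 0 1) ∧
      Hge m vp ((s : ℝ) + γ + γ' + ((p : ℝ) - 1)) ((M - D) 1 0) ∧
      (M - D) 1 1 = 0 := by
  intro M
  have hmpos : (0 : ℝ) < m := lt_trans one_pos hm
  have hp2 : 2 ≤ p := hp.two_le
  have hpR : (2 : ℝ) ≤ p := by exact_mod_cast hp2
  obtain ⟨q, hq⟩ := hgd
  have hg0 : constantCoeff g = 0 := by simp [hq]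
  have hG0 : constantCoeff (phiF p g) = 0 := by
    rw [← PowerSeries.coeff_zero_eq_constantCoeff] at hg0 ⊢
    rw [coeff_phiF]
    simpa using hg0
  have hphi : Hge m vp (γ' + ((p : ℝ) - 1)) (phiF p g) :=
    hge_phi hp2 hγ'.le hg hg0 hmpos
  have hvpos : (0 : ℝ) < γ' + ((p : ℝ) - 1) := by linarith
  have he : Hge m vp (γ' + ((p : ℝ) - 1)) ((1 - phiF p g)⁻¹ - 1) :=
    hge_inv_sub_one hvp_mul hvp_add hvpos hphi hG0 hmpos
  have he' : Hge m vp γ' ((1 - phiF p g)⁻¹ - 1) := hge_mono (by linarith) he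
  have hM : M = !![1 - g, 0; 0, 1] * D * !![(1 - phiF p g)⁻¹, 0; 0, 1] := rfl
  refine ⟨?_, ?_, ?_, ?_⟩
  · -- (0,0) entry
    have hentry : (M - D) 0 0 =
        D 0 0 * (((1 - phiF p g)⁻¹ - 1) + -g + -(g * ((1 - phiF p g)⁻¹ - 1))) := by
      rw [hM, Matrix.eta_fin_two D]
      simp only [Matrix.mul_fin_two, Matrix.sub_apply, Matrix.cons_val', Matrix.cons_val_zero,
        Matrix.empty_val', Matrix.cons_val_fin_one, Matrix.cons_val_one, Matrix.head_cons,
        Matrix.head_fin_const, Matrix.of_apply, Matrix.cons_val_zero]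
      ring
    rw [hentry]
    have h2 : Hge m vp γ'
        (((1 - phiF p g)⁻¹ - 1) + -g + -(g * ((1 - phiF p g)⁻¹ - 1))) := by
      refine hge_add hvp_add ?_ ?_ hmpos
      · exact hge_add hvp_add he' (hge_neg hvp_mul hg) hmpos
      · exact hge_neg hvp_mul
          (hge_mono (by linarith : γ' ≤ γ' + γ') (hge_mul hvp_mul hvp_add hg he' hmpos))
    exact hge_mul hvp_mul hvp_add hD11 h2 hmpos
  · -- (0,1) entry
    have hentry : (M - D) 0 1 = D 0 1 * (-g) := by
      rw [hM, Matrix.eta_fin_two D]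
      simp only [Matrix.mul_fin_two, Matrix.sub_apply, Matrix.cons_val', Matrix.cons_val_zero,
        Matrix.empty_val', Matrix.cons_val_fin_one, Matrix.cons_val_one, Matrix.head_cons,
        Matrix.head_fin_const, Matrix.of_apply, Matrix.cons_val_zero]
      ring
    rw [hentry]
    exact hge_mul hvp_mul hvp_add hD12 (hge_neg hvp_mul hg) hmpos
  · -- (1,0) entry
    have hentry : (M - D) 1 0 = D 1 0 * ((1 - phiF p g)⁻¹ - 1) := by
      rw [hM, Matrix.eta_fin_two D]
      simp only [Matrix.mul_fin_two, Matrix.sub_apply, Matrix.cons_val', Matrix.cons_val_zero,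
        Matrix.empty_val', Matrix.cons_val_fin_one, Matrix.cons_val_one, Matrix.head_cons,
        Matrix.head_fin_const, Matrix.of_apply, Matrix.cons_val_zero]
      ring
    rw [hentry, show (s : ℝ) + γ + γ' + ((p : ℝ) - 1) = ((s : ℝ) + γ) + (γ' + ((p : ℝ) - 1))
      from by ring]
    exact hge_mul hvp_mul hvp_add hD21 he hmpos
  · -- (1,1) entry
    rw [hM, Matrix.eta_fin_two D]
    simp only [Matrix.mul_fin_two, Matrix.sub_apply, Matrix.cons_val', Matrix.cons_val_zero,
      Matrix.empty_val', Matrix.cons_val_fin_one, Matrix.cons_val_one, Matrix.head_cons,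
      Matrix.head_fin_const, Matrix.of_apply, Matrix.cons_val_zero]
    ring
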